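/- The recursively defined matrices A_0 = (1) and A_{k+1} = [[A_k, A_k, I],[A_k, -A_k, 0]] have 2^k rows and (k+2)·2^{k-1} columns for k ≥ 1, and each A_k is injective on binary vectors. -/

import Mathlib

/-- Number of columns of the Cantor–Mills matrix `A_k`. -/
def cmCols : ℕ → ℕ
  | 0 => 1
  | k + 1 => 2 * cmCols k + 2 ^ k

/-- The Cantor–Mills matrices: `A_0 = (1)` and
`A_{k+1} = [[A_k, A_k, I], [A_k, -A_k, 0]]`. -/
def cmMatrix : (k : ℕ) → Matrix (Fin (2 ^ k)) (Fin (cmCols k)) ℤ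
  | 0 => fun _ _ => 1
  | k + 1 =>
    Matrix.reindex
      (finSumFinEquiv.trans (finCongr (by rw [pow_succ]; ring)))
      ((Equiv.sumCongr finSumFinEquiv (Equiv.refl (Fin (2 ^ k)))).trans
        (finSumFinEquiv.trans (finCongr (by show cmCols k + cmCols k + 2 ^ k = cmCols (k + 1); simp [cmCols]; ring))))
      (Matrix.fromBlocks (Matrix.fromCols (cmMatrix k) (cmMatrix k))
        (1 : Matrix (Fin (2 ^ k)) (Fin (2 ^ k)) ℤ)
        (Matrix.fromCols (cmMatrix k) (-(cmMatrix k)))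
        (0 : Matrix (Fin (2 ^ k)) (Fin (2 ^ k)) ℤ))

lemma cmCols_formula : ∀ k, 1 ≤ k → cmCols k = (k + 2) * 2 ^ (k - 1) := by
  intro k hk
  induction k with
  | zero => omega
  | succ n ih =>
    rcases Nat.eq_zero_or_pos n with rfl | hn
    · decide
    · have h := ih hn
      simp only [cmCols, h, Nat.add_sub_cancel]
      have h1 : n - 1 + 1 = n := by omega
      calc 2 * ((n + 2) * 2 ^ (n - 1)) + 2 ^ n
          = (n + 2) * (2 ^ (n - 1) * 2) + 2 ^ n := by ring
        _ = (n + 2) * 2 ^ n + 2 ^ n := by rw [← pow_succ, h1]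
        _ = (n + 1 + 2) * 2 ^ n := by ring

lemma cmMatrix_inj : ∀ k : ℕ, ∀ x y : Fin (cmCols k) → ℤ,
    (∀ j, x j = 0 ∨ x j = 1) → (∀ j, y j = 0 ∨ y j = 1) →
    (cmMatrix k).mulVec x = (cmMatrix k).mulVec y → x = y := by
  intro k
  induction k with
  | zero =>
    intro x y hx hy h
    have hsub : Subsingleton (Fin (cmCols 0)) := by
      rw [show cmCols 0 = 1 from rfl]; infer_instance
    have h0 := congrFun h ⟨0, by norm_num⟩
    simp only [cmMatrix, Matrix.mulVec, dotProduct, one_mul] at h0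
    funext j
    calc x j = ∑ j', x j' := (Fintype.sum_subsingleton x j).symm
      _ = ∑ j', y j' := h0
      _ = y j := Fintype.sum_subsingleton y j
  | succ k ih =>
    intro x y hx hy h
    set A := cmMatrix k with hA
    set M := Matrix.fromBlocks (Matrix.fromCols A A)
        (1 : Matrix (Fin (2 ^ k)) (Fin (2 ^ k)) ℤ)
        (Matrix.fromCols A (-A))
        (0 : Matrix (Fin (2 ^ k)) (Fin (2 ^ k)) ℤ) with hM
    set e : Fin (2 ^ k) ⊕ Fin (2 ^ k) ≃ Fin (2 ^ (k + 1)) :=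
      finSumFinEquiv.trans (finCongr (by rw [pow_succ]; ring)) with he
    set f : (Fin (cmCols k) ⊕ Fin (cmCols k)) ⊕ Fin (2 ^ k) ≃ Fin (cmCols (k + 1)) :=
      (Equiv.sumCongr finSumFinEquiv (Equiv.refl (Fin (2 ^ k)))).trans
        (finSumFinEquiv.trans (finCongr (by show cmCols k + cmCols k + 2 ^ k = cmCols (k + 1); simp [cmCols]; ring))) with hf
    have hdef : cmMatrix (k + 1) = Matrix.reindex e f M := rfl
    rw [hdef, Matrix.reindex_apply, Matrix.submatrix_mulVec_equiv,
      Matrix.submatrix_mulVec_equiv] at h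
    simp only [Equiv.symm_symm] at h
    have h' : M.mulVec (x ∘ f) = M.mulVec (y ∘ f) := by
      funext i
      have := congrFun h (e i)
      simpa using this
    set u : (Fin (cmCols k) ⊕ Fin (cmCols k)) ⊕ Fin (2 ^ k) → ℤ := x ∘ f with hu
    set v : (Fin (cmCols k) ⊕ Fin (cmCols k)) ⊕ Fin (2 ^ k) → ℤ := y ∘ f with hv
    set u1 : Fin (cmCols k) → ℤ := fun j => u (Sum.inl (Sum.inl j)) with hu1
    set u2 : Fin (cmCols k) → ℤ := fun j => u (Sum.inl (Sum.inr j)) with hu2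
    set u3 : Fin (2 ^ k) → ℤ := fun j => u (Sum.inr j) with hu3
    set v1 : Fin (cmCols k) → ℤ := fun j => v (Sum.inl (Sum.inl j)) with hv1
    set v2 : Fin (cmCols k) → ℤ := fun j => v (Sum.inl (Sum.inr j)) with hv2
    set v3 : Fin (2 ^ k) → ℤ := fun j => v (Sum.inr j) with hv3
    have hue : u = Sum.elim (Sum.elim u1 u2) u3 := by
      funext s; rcases s with (s | s) | s <;> rfl
    have hve : v = Sum.elim (Sum.elim v1 v2) v3 := by
      funext s; rcases s with (s | s) | s <;> rfl
    rw [hue, hve, hM, Matrix.fromBlocks_mulVec, Matrix.fromBlocks_mulVec] at h'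
    have htop : ∀ i, A.mulVec u1 i + A.mulVec u2 i + u3 i
        = A.mulVec v1 i + A.mulVec v2 i + v3 i := by
      intro i
      have := congrFun h' (Sum.inl i)
      simpa [Matrix.fromCols_mulVec_sumElim, Matrix.one_mulVec,
        Sum.elim_comp_inl, Sum.elim_comp_inr, add_assoc] using this
    have hbot : ∀ i, A.mulVec u1 i - A.mulVec u2 i
        = A.mulVec v1 i - A.mulVec v2 i := by
      intro i
      have := congrFun h' (Sum.inr i)
      simpa [Matrix.fromCols_mulVec_sumElim, Matrix.neg_mulVec,
        Matrix.zero_mulVec, Sum.elim_comp_inl, Sum.elim_comp_inr, sub_eq_add_neg] using this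
    have key : ∀ i, A.mulVec u1 i = A.mulVec v1 i ∧ A.mulVec u2 i = A.mulVec v2 i
        ∧ u3 i = v3 i := by
      intro i
      have h1 := htop i
      have h2 := hbot i
      have h3 : u3 i = 0 ∨ u3 i = 1 := hx (f (Sum.inr i))
      have h4 : v3 i = 0 ∨ v3 i = 1 := hy (f (Sum.inr i))
      omega
    have e1 : u1 = v1 := by
      refine ih u1 v1 (fun j => hx (f (Sum.inl (Sum.inl j))))
        (fun j => hy (f (Sum.inl (Sum.inl j)))) ?_
      funext i; exact (key i).1
    have e2 : u2 = v2 := by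
      refine ih u2 v2 (fun j => hx (f (Sum.inl (Sum.inr j))))
        (fun j => hy (f (Sum.inl (Sum.inr j)))) ?_
      funext i; exact (key i).2.1
    have e3 : u3 = v3 := by funext i; exact (key i).2.2
    have huv : u = v := by rw [hue, hve, e1, e2, e3]
    funext j
    have : u (f.symm j) = v (f.symm j) := by rw [huv]
    simpa [hu, hv] using this

/-- `A_k` has `2^k` rows and `(k+2)·2^{k-1}` columns for `k ≥ 1`, and each
`A_k` is injective on binary vectors. -/
theorem cmMatrix_cols_and_injective :
    (∀ k : ℕ, 1 ≤ k → cmCols k = (k + 2) * 2 ^ (k - 1)) ∧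
    (∀ k : ℕ, ∀ x y : Fin (cmCols k) → ℤ,
      (∀ j, x j = 0 ∨ x j = 1) → (∀ j, y j = 0 ∨ y j = 1) →
      (cmMatrix k).mulVec x = (cmMatrix k).mulVec y → x = y) := by
  exact ⟨cmCols_formula, cmMatrix_inj⟩
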